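/- Fix N ≥ 2, q a primitive N-th root of unity, a ∈ {0,1}, α ∈ C^2, b ∈ C. On the vector space with basis {v_k : k ∈ Z^2}, the formulas x^m · v_k = (q^{m2 k1} - a q^{m1 k2}) v_{m+k} for m ∈ Z^2 \ N·Z^2, and (x^n ∂) · v_k = ⟨∂, α + k + b n⟩ v_{n+k} for n ∈ N·Z^2, ∂ ∈ C∂_1 ⊕ C∂_2, define a module A_{a,α,b} over the Lie algebra Der(C_q); in particular the required bracket compatibilities hold: [x^m, x^{m'}]·v = x^m·(x^{m'}·v) − x^{m'}·(x^m·v) for m, m' ∈ Z^2\N·Z^2, and similarly for brackets involving x^n ∂. -/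
import Mathlib


/-- For `N ≥ 2`, `q` a primitive `N`-th root of unity, `a ∈ {0,1}`, `α ∈ ℂ²`, `b ∈ ℂ`,
the formulas `x^m · v_k = (q^(m₂k₁) − a q^(m₁k₂)) v_(m+k)` (for `m ∈ ℤ² \ N·ℤ²`) and
`(x^n ∂) · v_k = ⟨∂, α + k + b n⟩ v_(n+k)` (for `n ∈ N·ℤ²`) define a module
`A_{a,α,b}` over `Der C_q`: the required bracket compatibilities hold on each
basis vector `v_k`. -/
theorem stmt_5 (N : ℕ) (hN : 2 ≤ N) (q : ℂ) (hq : IsPrimitiveRoot q N)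
    (a : ℂ) (ha : a = 0 ∨ a = 1) (α : ℂ × ℂ) (b : ℂ)
    (V : Type*) [AddCommGroup V] [Module ℂ V] (v : ℤ × ℤ → V)
    (X : ℤ × ℤ → Module.End ℂ V) (T : ℤ × ℤ → ℂ × ℂ → Module.End ℂ V)
    (hX : ∀ m k : ℤ × ℤ, ¬((N : ℤ) ∣ m.1 ∧ (N : ℤ) ∣ m.2) →
      X m (v k) = (q ^ (m.2 * k.1) - a * q ^ (m.1 * k.2)) • v (m + k))
    (hT : ∀ n k : ℤ × ℤ, (N : ℤ) ∣ n.1 → (N : ℤ) ∣ n.2 → ∀ d : ℂ × ℂ,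
      T n d (v k) =
        (d.1 * (α.1 + (k.1 : ℂ) + b * (n.1 : ℂ)) + d.2 * (α.2 + (k.2 : ℂ) + b * (n.2 : ℂ)))
          • v (n + k)) :
    (∀ m m' : ℤ × ℤ, ¬((N : ℤ) ∣ m.1 ∧ (N : ℤ) ∣ m.2) →
        ¬((N : ℤ) ∣ m'.1 ∧ (N : ℤ) ∣ m'.2) →
        ¬((N : ℤ) ∣ (m + m').1 ∧ (N : ℤ) ∣ (m + m').2) → ∀ k : ℤ × ℤ,
        ⁅X m, X m'⁆ (v k) = (q ^ (m.2 * m'.1) - q ^ (m.1 * m'.2)) • X (m + m') (v k)) ∧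
    (∀ m m' : ℤ × ℤ, ¬((N : ℤ) ∣ m.1 ∧ (N : ℤ) ∣ m.2) →
        ¬((N : ℤ) ∣ m'.1 ∧ (N : ℤ) ∣ m'.2) →
        ((N : ℤ) ∣ (m + m').1 ∧ (N : ℤ) ∣ (m + m').2) → ∀ k : ℤ × ℤ,
        ⁅X m, X m'⁆ (v k) = 0) ∧
    (∀ n m : ℤ × ℤ, (N : ℤ) ∣ n.1 → (N : ℤ) ∣ n.2 →
        ¬((N : ℤ) ∣ m.1 ∧ (N : ℤ) ∣ m.2) → ∀ d : ℂ × ℂ, ∀ k : ℤ × ℤ,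
        ⁅T n d, X m⁆ (v k) = (d.1 * (m.1 : ℂ) + d.2 * (m.2 : ℂ)) • X (n + m) (v k)) ∧
    (∀ n n' : ℤ × ℤ, (N : ℤ) ∣ n.1 → (N : ℤ) ∣ n.2 → (N : ℤ) ∣ n'.1 → (N : ℤ) ∣ n'.2 →
        ∀ d d' : ℂ × ℂ, ∀ k : ℤ × ℤ,
        ⁅T n d, T n' d'⁆ (v k) =
          (d.1 * (n'.1 : ℂ) + d.2 * (n'.2 : ℂ)) • T (n + n') d' (v k)
            - (d'.1 * (n.1 : ℂ) + d'.2 * (n.2 : ℂ)) • T (n + n') d (v k)) := by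
  have hN0 : N ≠ 0 := by omega
  have hq0 : q ≠ 0 := hq.ne_zero hN0
  have hqN : q ^ (N : ℤ) = 1 := by
    rw [zpow_natCast]; exact hq.pow_eq_one
  have hone : ∀ e : ℤ, (N : ℤ) ∣ e → q ^ e = 1 := by
    rintro e ⟨t, rfl⟩
    rw [zpow_mul, hqN, one_zpow]
  refine ⟨?_, ?_, ?_, ?_⟩
  · intro m m' hm hm' hmm' k
    rw [Ring.lie_def, LinearMap.sub_apply, Module.End.mul_apply, Module.End.mul_apply,
      hX m' k hm', map_smul, hX m (m' + k) hm, hX m k hm, map_smul, hX m' (m + k) hm',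
      hX (m + m') k hmm', smul_smul, smul_smul, smul_smul,
      show m + (m' + k) = m + m' + k from (add_assoc m m' k).symm,
      show m' + (m + k) = m + m' + k from by abel, ← sub_smul]
    congr 1
    simp only [Prod.fst_add, Prod.snd_add, mul_add, add_mul, zpow_add₀ hq0]
    rw [show m'.2 * m.1 = m.1 * m'.2 from mul_comm _ _,
      show m'.1 * m.2 = m.2 * m'.1 from mul_comm _ _]
    rcases ha with h | h <;> subst h <;> ring
  · intro m m' hm hm' hmm' k
    rw [Ring.lie_def, LinearMap.sub_apply, Module.End.mul_apply, Module.End.mul_apply,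
      hX m' k hm', map_smul, hX m (m' + k) hm, hX m k hm, map_smul, hX m' (m + k) hm',
      smul_smul, smul_smul,
      show m + (m' + k) = m + m' + k from (add_assoc m m' k).symm,
      show m' + (m + k) = m + m' + k from by abel, ← sub_smul]
    refine smul_eq_zero_of_left ?_ _
    obtain ⟨⟨s, hs⟩, ⟨t, ht⟩⟩ := hmm'
    have hs1 : m.1 + m'.1 = (N : ℤ) * s := hs
    have ht1 : m.2 + m'.2 = (N : ℤ) * t := ht
    have hd : (N : ℤ) ∣ (m.2 * m'.1 - m.1 * m'.2) :=
      ⟨m.2 * s - m.1 * t, by linear_combination m.2 * hs1 - m.1 * ht1⟩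
    have hAB : q ^ (m.2 * m'.1) = q ^ (m.1 * m'.2) := by
      rw [show m.2 * m'.1 = m.1 * m'.2 + (m.2 * m'.1 - m.1 * m'.2) from by ring,
        zpow_add₀ hq0, hone _ hd, mul_one]
    simp only [Prod.fst_add, Prod.snd_add, mul_add, add_mul, zpow_add₀ hq0]
    rw [show m'.2 * m.1 = m.1 * m'.2 from mul_comm _ _,
      show m'.1 * m.2 = m.2 * m'.1 from mul_comm _ _, hAB]
    rcases ha with h | h <;> subst h <;> ring
  · intro n m hn1 hn2 hm d k
    have hnm : ¬((N : ℤ) ∣ (n + m).1 ∧ (N : ℤ) ∣ (n + m).2) := by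
      rintro ⟨h1, h2⟩
      exact hm ⟨(dvd_add_right hn1).mp (by simpa using h1),
        (dvd_add_right hn2).mp (by simpa using h2)⟩
    rw [Ring.lie_def, LinearMap.sub_apply, Module.End.mul_apply, Module.End.mul_apply,
      hX m k hm, map_smul, hT n (m + k) hn1 hn2 d, hT n k hn1 hn2 d, map_smul,
      hX m (n + k) hm, hX (n + m) k hnm, smul_smul, smul_smul, smul_smul,
      show n + (m + k) = n + m + k from (add_assoc n m k).symm,
      show m + (n + k) = n + m + k from by abel, ← sub_smul]
    congr 1
    obtain ⟨s, hs⟩ := hn1; obtain ⟨t, ht⟩ := hn2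
    have h1 : q ^ (m.2 * (n + k).1) = q ^ (m.2 * k.1) := by
      rw [show m.2 * (n + k).1 = m.2 * k.1 + (N : ℤ) * (m.2 * s) from by
        simp only [Prod.fst_add]; rw [hs]; ring,
        zpow_add₀ hq0, hone _ ⟨m.2 * s, rfl⟩, mul_one]
    have h2 : q ^ (m.1 * (n + k).2) = q ^ (m.1 * k.2) := by
      rw [show m.1 * (n + k).2 = m.1 * k.2 + (N : ℤ) * (m.1 * t) from by
        simp only [Prod.snd_add]; rw [ht]; ring,
        zpow_add₀ hq0, hone _ ⟨m.1 * t, rfl⟩, mul_one]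
    have h3 : q ^ ((n + m).2 * k.1) = q ^ (m.2 * k.1) := by
      rw [show (n + m).2 * k.1 = m.2 * k.1 + (N : ℤ) * (t * k.1) from by
        simp only [Prod.snd_add]; rw [ht]; ring,
        zpow_add₀ hq0, hone _ ⟨t * k.1, rfl⟩, mul_one]
    have h4 : q ^ ((n + m).1 * k.2) = q ^ (m.1 * k.2) := by
      rw [show (n + m).1 * k.2 = m.1 * k.2 + (N : ℤ) * (s * k.2) from by
        simp only [Prod.fst_add]; rw [hs]; ring,
        zpow_add₀ hq0, hone _ ⟨s * k.2, rfl⟩, mul_one]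
    rw [h1, h2, h3, h4]
    simp only [Prod.fst_add, Prod.snd_add]
    push_cast
    ring
  · intro n n' hn1 hn2 hn'1 hn'2 d d' k
    have hs1 : (N : ℤ) ∣ (n + n').1 := by simpa using dvd_add hn1 hn'1
    have hs2 : (N : ℤ) ∣ (n + n').2 := by simpa using dvd_add hn2 hn'2
    rw [Ring.lie_def, LinearMap.sub_apply, Module.End.mul_apply, Module.End.mul_apply,
      hT n' k hn'1 hn'2 d', map_smul, hT n (n' + k) hn1 hn2 d, hT n k hn1 hn2 d,
      map_smul, hT n' (n + k) hn'1 hn'2 d', hT (n + n') k hs1 hs2 d',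
      hT (n + n') k hs1 hs2 d, smul_smul, smul_smul, smul_smul, smul_smul,
      show n + (n' + k) = n + n' + k from (add_assoc n n' k).symm,
      show n' + (n + k) = n + n' + k from by abel, ← sub_smul, ← sub_smul]
    congr 1
    simp only [Prod.fst_add, Prod.snd_add]
    push_cast
    ring
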